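/- Let n, N ∈ ℕ and Q, P ∈ ℝ^{n×N}. Set S := QᵀQ + PᵀP ∈ ℝ^{N×N}, let G := [[QᵀQ, QᵀP], [PᵀQ, PᵀP]] ∈ ℝ^{2N×2N} be the Gram matrix of the vertically stacked matrix [Q; P], and let Ŝ := diag(S, S) ∈ ℝ^{2N×2N} be the block-diagonal matrix with S in both diagonal blocks. Then G is positive semidefinite and 2Ŝ − G is positive semidefinite, i.e., 2Ŝ ⪰ G ⪰ 0. -/

import Mathlib

open Matrix

lemma gram_eq (n N : ℕ) (Q P : Matrix (Fin n) (Fin N) ℝ) :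
    Matrix.fromBlocks (Qᵀ * Q) (Qᵀ * P) (Pᵀ * Q) (Pᵀ * P)
      = (Matrix.fromCols Q P)ᴴ * Matrix.fromCols Q P := by
  rw [conjTranspose_eq_transpose_of_trivial, transpose_fromCols, fromRows_mul_fromCols]

/-- For snapshot matrices `Q, P ∈ ℝ^{n×N}`, with `S := QᵀQ + PᵀP`, the Gram matrix
`G = [[QᵀQ, QᵀP], [PᵀQ, PᵀP]]` of `[Q; P]` satisfies `2·diag(S,S) ⪰ G ⪰ 0`. -/
theorem stmt18 (n N : ℕ) (Q P : Matrix (Fin n) (Fin N) ℝ) :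
    (Matrix.fromBlocks (Qᵀ * Q) (Qᵀ * P) (Pᵀ * Q) (Pᵀ * P)).PosSemidef ∧
    ((2 : ℝ) • Matrix.fromBlocks (Qᵀ * Q + Pᵀ * P) 0 0 (Qᵀ * Q + Pᵀ * P)
        - Matrix.fromBlocks (Qᵀ * Q) (Qᵀ * P) (Pᵀ * Q) (Pᵀ * P)).PosSemidef := by
  constructor
  · rw [gram_eq]
    exact posSemidef_conjTranspose_mul_self _
  · have h2 : Real.sqrt 2 * Real.sqrt 2 = 2 := Real.mul_self_sqrt (by norm_num)
    have h1 : ((2:ℝ) • Matrix.fromBlocks (Qᵀ * Q + Pᵀ * P) 0 0 (Qᵀ * Q + Pᵀ * P)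
        - Matrix.fromBlocks (Qᵀ * Q) (Qᵀ * P) (Pᵀ * Q) (Pᵀ * P))
        = (Matrix.fromCols Q (-P))ᴴ * Matrix.fromCols Q (-P)
          + (Matrix.fromBlocks (Real.sqrt 2 • P) 0 0 (Real.sqrt 2 • Q))ᴴ
            * Matrix.fromBlocks (Real.sqrt 2 • P) 0 0 (Real.sqrt 2 • Q) := by
      rw [conjTranspose_eq_transpose_of_trivial, conjTranspose_eq_transpose_of_trivial,
        transpose_fromCols, fromRows_mul_fromCols, Matrix.fromBlocks_transpose,
        Matrix.fromBlocks_multiply]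
      simp only [Matrix.transpose_neg, Matrix.transpose_smul, Matrix.transpose_zero,
        Matrix.mul_zero, Matrix.zero_mul, add_zero, zero_add,
        Matrix.smul_mul, Matrix.mul_smul, Matrix.neg_mul, Matrix.mul_neg, neg_neg,
        smul_smul, h2]
      ext i j
      rcases i with i | i <;> rcases j with j | j <;>
        simp [Matrix.fromBlocks, Matrix.smul_apply, Matrix.sub_apply, Matrix.add_apply] <;>
        ring
    rw [h1]
    exact (posSemidef_conjTranspose_mul_self _).add (posSemidef_conjTranspose_mul_self _)
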